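/- For every ε > 0 and every z ∈ ℂ∖{0} there exist δ > 0 and N ∈ ℕ such that for all n ≥ N, the number of indices j with 0 ≤ j ≤ n and (n^j/j!)^{1/2} |z|^j > e^{n(V(z) − ε)} is at least δ n, where V(z) = |z|²/2 for |z| ≤ 1 and V(z) = log|z| + 1/2 for |z| > 1. -/

import Mathlib

open Filter
open scoped Classical

/-- The weighted extremal function `V_Q` of the weight `Q(z) = |z|²/2`:
`V(z) = |z|²/2` for `|z| ≤ 1` and `V(z) = log|z| + 1/2` for `|z| > 1`. -/
noncomputable def weylV (z : ℂ) : ℝ :=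
  if ‖z‖ ≤ 1 then ‖z‖ ^ 2 / 2 else Real.log (‖z‖) + 1 / 2

set_option maxHeartbeats 1000000

lemma factorial_le_aux : ∀ j : ℕ, 1 ≤ j →
    (j.factorial : ℝ) ≤ (j : ℝ) ^ (j + 1) * Real.exp (1 - j) := by
  intro j hj
  induction j with
  | zero => omega
  | succ k ih =>
    rcases Nat.eq_zero_or_pos k with hk | hk
    · subst hk; simp [Nat.factorial]
    · have ih' := ih hk
      have hk0 : (0:ℝ) < k := by exact_mod_cast hk
      have hk1 : (0:ℝ) < (k:ℝ) + 1 := by positivity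
      -- exp (1/(k+1)) ≤ (k+1)/k
      have h2 : (k:ℝ)/((k:ℝ)+1) ≤ Real.exp (-(1/((k:ℝ)+1))) := by
        have h1 := Real.add_one_le_exp (-(1/((k:ℝ)+1)))
        have : -(1/((k:ℝ)+1)) + 1 = (k:ℝ)/((k:ℝ)+1) := by field_simp; ring
        linarith
      have hexp : Real.exp (1/((k:ℝ)+1)) ≤ ((k:ℝ)+1)/k := by
        have hmul : Real.exp (1/((k:ℝ)+1)) * Real.exp (-(1/((k:ℝ)+1))) = 1 := by
          rw [← Real.exp_add]; simp
        have h2' : (k:ℝ) ≤ Real.exp (-(1/((k:ℝ)+1))) * ((k:ℝ)+1) := (div_le_iff₀ hk1).mp h2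
        rw [le_div_iff₀ hk0]
        nlinarith [Real.exp_pos (1/((k:ℝ)+1))]
      have hpow : Real.exp 1 ≤ (((k:ℝ)+1)/k) ^ (k+1) := by
        have h4 := pow_le_pow_left₀ (Real.exp_nonneg _) hexp (k+1)
        have h5 : Real.exp (1/((k:ℝ)+1)) ^ (k+1) = Real.exp 1 := by
          rw [← Real.exp_nat_mul]
          congr 1
          field_simp; norm_num
        rwa [h5] at h4
      have hkey : (k:ℝ)^(k+1) * Real.exp 1 ≤ ((k:ℝ)+1)^(k+1) := by
        have := mul_le_mul_of_nonneg_left hpow (by positivity : (0:ℝ) ≤ (k:ℝ)^(k+1))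
        rwa [div_pow, mul_div_cancel₀] at this
        positivity
      have hsplit : Real.exp (1 - (k:ℝ)) = Real.exp (1 - ((k:ℝ)+1)) * Real.exp 1 := by
        rw [← Real.exp_add]; ring_nf
      have hc : ((k+1).factorial : ℝ) = ((k:ℝ)+1) * k.factorial := by
        rw [Nat.factorial_succ]; push_cast; ring
      have goalc : ((k:ℝ)+1) ^ (k+1+1) * Real.exp (1 - ((k:ℝ)+1)) =
          ((k:ℝ)+1) * (((k:ℝ)+1)^(k+1) * Real.exp (1 - ((k:ℝ)+1))) := by ring
      push_cast
      calc ((k+1).factorial : ℝ) = ((k:ℝ)+1) * k.factorial := hc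
        _ ≤ ((k:ℝ)+1) * ((k:ℝ)^(k+1) * Real.exp (1 - k)) := by
            gcongr
        _ = ((k:ℝ)+1) * Real.exp (1 - ((k:ℝ)+1)) * ((k:ℝ)^(k+1) * Real.exp 1) := by
            rw [hsplit]; ring
        _ ≤ ((k:ℝ)+1) * Real.exp (1 - ((k:ℝ)+1)) * ((k:ℝ)+1)^(k+1) := by
            have hpos : (0:ℝ) ≤ ((k:ℝ)+1) * Real.exp (1 - ((k:ℝ)+1)) := by positivity
            exact mul_le_mul_of_nonneg_left hkey hpos
        _ = ((k:ℝ)+1) ^ (k+1+1) * Real.exp (1 - ((k:ℝ)+1)) := by ring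


noncomputable def weylG (r t : ℝ) : ℝ := t * (1 - Real.log t) / 2 + t * Real.log r

lemma weylG_at_min (z : ℂ) (hz : z ≠ 0) :
    weylG (‖z‖) (min (‖z‖ ^ 2) 1) = weylV z := by
  set r := ‖z‖ with hrdef
  have hr0 : 0 < r := by
    simpa [hrdef] using norm_pos_iff.mpr hz
  unfold weylG weylV
  rcases le_or_gt r 1 with h1 | h1
  · have hmin : min (r ^ 2) 1 = r ^ 2 := min_eq_left (by nlinarith)
    rw [hmin, if_pos h1, Real.log_pow]
    push_cast
    ring
  · have hmin : min (r ^ 2) 1 = 1 := min_eq_right (by nlinarith)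
    rw [hmin, if_neg (not_le.mpr h1), Real.log_one]
    ring

lemma weylG_continuousAt (r t : ℝ) (ht : t ≠ 0) : ContinuousAt (weylG r) t := by
  unfold weylG
  exact (((continuousAt_id.mul (continuousAt_const.sub (Real.continuousAt_log ht))).div_const
    2).add (continuousAt_id.mul continuousAt_const))

/-- The one-dimensional Weyl instance of Lemma 3.1: for every `ε > 0` and `z ≠ 0`,
for all large `n` at least `δn` of the indices `0 ≤ j ≤ n` satisfy
`(n^j/j!)^{1/2} |z|^j > e^{n(V(z)-ε)}`. -/
theorem stmt_15 :
    ∀ ε > (0 : ℝ), ∀ z : ℂ, z ≠ 0 →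
      ∃ δ > (0 : ℝ), ∃ N : ℕ, ∀ n ≥ N,
        δ * (n : ℝ) ≤
          ((((Finset.range (n + 1)).filter (fun j =>
              Real.exp (n * (weylV z - ε)) <
                Real.sqrt ((n : ℝ) ^ j / j.factorial) * ‖z‖ ^ j)).card : ℕ) :
            ℝ) := by
  classical
  intro ε hε z hz
  set r := ‖z‖ with hrdef
  have hr0 : 0 < r := by simpa [hrdef] using norm_pos_iff.mpr hz
  set T := min (r ^ 2) 1 with hTdef
  have hT0 : 0 < T := lt_min (by positivity) one_pos
  have hT1 : T ≤ 1 := min_le_right _ _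
  have hGV : weylG r T = weylV z := weylG_at_min z hz
  have hcont : ContinuousAt (weylG r) T := weylG_continuousAt r T hT0.ne'
  have hlt : weylV z - ε / 2 < weylG r T := by rw [hGV]; linarith
  have hev : ∀ᶠ t in nhds T, weylV z - ε / 2 < weylG r t :=
    hcont.eventually (lt_mem_nhds hlt)
  obtain ⟨η, hη0, hball⟩ := Metric.eventually_nhds_iff.mp hev
  set c := min (η / 2) (T / 2) with hcdef
  have hc0 : 0 < c := lt_min (by linarith) (by linarith)
  have hcη : c ≤ η / 2 := min_le_left _ _
  have hcT : c ≤ T / 2 := min_le_right _ _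
  set a := T - c with hadef
  have ha0 : 0 < a := by simp only [hadef]; linarith
  refine ⟨c / 2, by linarith, ?_⟩
  -- eventual conditions on n
  have h1 : ∀ᶠ n : ℕ in atTop, (1 : ℝ) ≤ a * n := by
    have h := Filter.Tendsto.const_mul_atTop ha0 (tendsto_natCast_atTop_atTop (R := ℝ))
    exact h.eventually_ge_atTop 1
  have h3 : ∀ᶠ n : ℕ in atTop, (2 : ℝ) ≤ c * n := by
    have h := Filter.Tendsto.const_mul_atTop hc0 (tendsto_natCast_atTop_atTop (R := ℝ))
    exact h.eventually_ge_atTop 2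
  have h2 : ∀ᶠ n : ℕ in atTop, Real.log n + 1 < ε * n := by
    have hlo : ∀ᶠ x : ℝ in atTop, ‖Real.log x‖ ≤ ε / 2 * ‖x‖ :=
      Real.isLittleO_log_id_atTop.def (by linarith)
    have hlo' : ∀ᶠ n : ℕ in atTop, ‖Real.log (n : ℝ)‖ ≤ ε / 2 * ‖(n : ℝ)‖ :=
      (tendsto_natCast_atTop_atTop (R := ℝ)).eventually hlo
    have h4 : ∀ᶠ n : ℕ in atTop, (2 : ℝ) ≤ ε / 2 * n := by
      have h := Filter.Tendsto.const_mul_atTop (by linarith : (0:ℝ) < ε / 2)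
        (tendsto_natCast_atTop_atTop (R := ℝ))
      exact h.eventually_ge_atTop 2
    filter_upwards [hlo', h4] with n hn h4n
    have hn0 : (0 : ℝ) ≤ (n : ℝ) := Nat.cast_nonneg n
    rw [Real.norm_eq_abs, Real.norm_eq_abs, abs_of_nonneg hn0] at hn
    have := le_abs_self (Real.log (n : ℝ))
    nlinarith
  obtain ⟨N, hN⟩ := eventually_atTop.mp ((h1.and h3).and h2)
  refine ⟨N, ?_⟩
  intro n hn
  obtain ⟨⟨ha1, hc2⟩, hlogn⟩ := hN n hn
  have hn0 : (0 : ℝ) < (n : ℝ) := by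
    by_contra h
    push_neg at h
    nlinarith
  set A := ⌈a * (n : ℝ)⌉₊ with hAdef
  set B := ⌊T * (n : ℝ)⌋₊ with hBdef
  have hAle : (A : ℝ) < a * n + 1 := Nat.ceil_lt_add_one (by nlinarith)
  have hBge : T * n - 1 < (B : ℝ) := by
    have := Nat.lt_floor_add_one (T * (n : ℝ))
    linarith
  have hcnTa : T * n - a * n = c * n := by simp only [hadef]; ring
  have hAB : A ≤ B := by
    have : (A : ℝ) ≤ (B : ℝ) := by linarith
    exact_mod_cast this
  have hA1 : 1 ≤ A := Nat.one_le_ceil_iff.mpr (by nlinarith)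
  -- the subset
  have hsub : Finset.Icc A B ⊆ (Finset.range (n + 1)).filter (fun j =>
      Real.exp (n * (weylV z - ε)) <
        Real.sqrt ((n : ℝ) ^ j / j.factorial) * ‖z‖ ^ j) := by
    intro j hj
    rw [Finset.mem_Icc] at hj
    obtain ⟨hjA, hjB⟩ := hj
    have hja : a * n ≤ (j : ℝ) := by
      have := Nat.ceil_le.mp hjA
      exact this
    have hjb : (j : ℝ) ≤ T * n := by
      have := (Nat.le_floor_iff (by positivity)).mp hjB
      exact this
    have hj1 : 1 ≤ j := le_trans hA1 hjA
    have hj0 : (0 : ℝ) < (j : ℝ) := by exact_mod_cast hj1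
    have hjn : j ≤ n := by
      have : (j : ℝ) ≤ (n : ℝ) := by nlinarith
      exact_mod_cast this
    rw [Finset.mem_filter]
    refine ⟨Finset.mem_range.mpr (Nat.lt_succ_of_le hjn), ?_⟩
    set t := (j : ℝ) / n with htdef
    have ht0 : 0 < t := by positivity
    have hta : a ≤ t := (le_div_iff₀ hn0).mpr (by linarith)
    have htb : t ≤ T := (div_le_iff₀ hn0).mpr (by linarith)
    have hdist : dist t T < η := by
      rw [Real.dist_eq, abs_lt]
      constructor <;> simp only [hadef] at hta <;> [linarith; linarith]
    have hg : weylV z - ε / 2 < weylG r t := hball hdist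
    have hq0 : (0 : ℝ) < (n : ℝ) ^ j / j.factorial := by positivity
    have hsqrt_eq : Real.sqrt ((n : ℝ) ^ j / j.factorial) =
        Real.exp (Real.log ((n : ℝ) ^ j / j.factorial) / 2) := by
      rw [← Real.log_sqrt hq0.le, Real.exp_log (Real.sqrt_pos.mpr hq0)]
    have hrj : r ^ j = Real.exp ((j : ℝ) * Real.log r) := by
      rw [← Real.log_pow, Real.exp_log (pow_pos hr0 _)]
    rw [← hrdef, hsqrt_eq, hrj, ← Real.exp_add, Real.exp_lt_exp]
    have hlogq : Real.log ((n : ℝ) ^ j / j.factorial) =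
        (j : ℝ) * Real.log n - Real.log (j.factorial : ℝ) := by
      rw [Real.log_div (by positivity) (by positivity), Real.log_pow]
    rw [hlogq]
    have hfact : Real.log (j.factorial : ℝ) ≤ ((j : ℝ) + 1) * Real.log j + (1 - j) := by
      have h := factorial_le_aux j hj1
      have h2 := Real.log_le_log (by positivity) h
      rw [Real.log_mul (by positivity) (Real.exp_ne_zero _), Real.log_pow,
        Real.log_exp] at h2
      push_cast at h2
      linarith
    have hlogj : Real.log (j : ℝ) ≤ Real.log (n : ℝ) :=
      Real.log_le_log hj0 (by exact_mod_cast hjn)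
    have hlogt : Real.log t = Real.log j - Real.log n := Real.log_div hj0.ne' hn0.ne'
    have halg : (n : ℝ) * weylG r t =
        ((j : ℝ) * Real.log n - (j : ℝ) * Real.log j + j) / 2 + j * Real.log r := by
      have hnt : (n : ℝ) * t = j := by rw [htdef]; field_simp
      unfold weylG
      rw [hlogt]
      linear_combination ((1 - (Real.log j - Real.log n)) / 2 + Real.log r) * hnt
    have hgn : (n : ℝ) * (weylV z - ε / 2) < (n : ℝ) * weylG r t :=
      mul_lt_mul_of_pos_left hg hn0
    have hVexp : (n : ℝ) * (weylV z - ε) = (n : ℝ) * (weylV z - ε / 2) - n * (ε / 2) := by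
      ring
    linarith
  -- counting
  have hcard : (Finset.Icc A B).card = B + 1 - A := Nat.card_Icc A B
  have hcardR : ((Finset.Icc A B).card : ℝ) = (B : ℝ) + 1 - A := by
    rw [hcard, Nat.cast_sub (by omega)]
    push_cast
    ring
  have hle := Finset.card_le_card hsub
  have hleR : ((Finset.Icc A B).card : ℝ) ≤
      (((Finset.range (n + 1)).filter (fun j =>
        Real.exp (n * (weylV z - ε)) <
          Real.sqrt ((n : ℝ) ^ j / j.factorial) * ‖z‖ ^ j)).card : ℝ) := by
    exact_mod_cast hle
  have : c / 2 * n ≤ (B : ℝ) + 1 - A := by linarith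
  linarith
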